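/- Suppose each g_i is twice continuously differentiable, let (x, y, w) ∈ ℝⁿ × ℝⁿ × ℝᵐ, and assume P₂ is continuously differentiable around x. Then for every λ ∈ N_{−ℝ₊ᵐ}(bar G(x,y,w)) and every u ∈ ∂P₁(x), the vector with block components (∇f(x) − ∇P₂(x) + u + Σᵢ λᵢ[∇gᵢ(y) + wᵢ(x − y)], Σᵢ λᵢ[∇²gᵢ(y)(x − y) − wᵢ(x − y)], (1/2)‖x − y‖² λ) belongs to the limiting subdifferential ∂bar F(x, y, w). -/

import Mathlib

open Set Filter Topology Metric Bornology RealInnerProductSpace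
open scoped Classical

noncomputable section

abbrev Euc (n : ℕ) : Type := EuclideanSpace ℝ (Fin n)

/-- Convex subdifferential of a real-valued function on an inner product space. -/
def ConvexSubdiff {H : Type*} [NormedAddCommGroup H] [InnerProductSpace ℝ H]
    (P : H → ℝ) (x : H) : Set H :=
  {ζ | ∀ y, ⟪ζ, y - x⟫ ≤ P y - P x}

/-- Regular (Fréchet) subdifferential of an extended-real-valued function. -/
def RegularSubdiff {H : Type*} [NormedAddCommGroup H] [InnerProductSpace ℝ H]
    (h : H → EReal) (x : H) : Set H :=
  {ζ | h x ≠ ⊤ ∧ h x ≠ ⊥ ∧ ∀ ε : ℝ, 0 < ε →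
    ∀ᶠ z in 𝓝 x,
      (((h x).toReal + ⟪ζ, z - x⟫ - ε * ‖z - x‖ : ℝ) : EReal) ≤ h z}

/-- Limiting (Mordukhovich) subdifferential. -/
def LimSubdiff {H : Type*} [NormedAddCommGroup H] [InnerProductSpace ℝ H]
    (h : H → EReal) (x : H) : Set H :=
  {ζ | ∃ xs ζs : ℕ → H, (∀ k, ζs k ∈ RegularSubdiff h (xs k)) ∧
    Tendsto xs atTop (𝓝 x) ∧ Tendsto (fun k => h (xs k)) atTop (𝓝 (h x)) ∧
    Tendsto ζs atTop (𝓝 ζ)}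

/-- The Kurdyka–Łojasiewicz property with exponent `α` at a point. -/
def KLExpAt {H : Type*} [NormedAddCommGroup H] [InnerProductSpace ℝ H]
    (h : H → EReal) (α : ℝ) (xhat : H) : Prop :=
  ∃ a₀ : ℝ, 0 < a₀ ∧ ∃ a : ℝ, 0 < a ∧ ∃ V ∈ 𝓝 xhat, ∀ x ∈ V,
    h xhat < h x → h x < h xhat + (a : EReal) →
    1 ≤ a₀ * (1 - α) * ((h x).toReal - (h xhat).toReal) ^ (-α) *
        infDist 0 (LimSubdiff h x)

/-- The general Kurdyka–Łojasiewicz property at a point. -/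
def KLAt {H : Type*} [NormedAddCommGroup H] [InnerProductSpace ℝ H]
    (h : H → EReal) (xhat : H) : Prop :=
  ∃ a : ℝ, 0 < a ∧ ∃ V ∈ 𝓝 xhat, ∃ φ φ' : ℝ → ℝ,
    φ 0 = 0 ∧ ContinuousOn φ (Ico 0 a) ∧ ConcaveOn ℝ (Ico 0 a) φ ∧
    (∀ s ∈ Ioo 0 a, HasDerivAt φ (φ' s) s ∧ 0 < φ' s) ∧
    ∀ x ∈ V, h xhat < h x → h x < h xhat + (a : EReal) →
      1 ≤ φ' ((h x).toReal - (h xhat).toReal) * infDist 0 (LimSubdiff h x)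

/-- The extended objective of problem (P). -/
def Fobj {n m : ℕ} (f P1 P2 : Euc n → ℝ) (g : Fin m → Euc n → ℝ) (x : Euc n) : EReal :=
  if ∀ i, g i x ≤ 0 then ((f x + P1 x - P2 x : ℝ) : EReal) else ⊤

/-- The moving balls constraint functions. -/
def barG {n m : ℕ} (g : Fin m → Euc n → ℝ) (g' : Fin m → Euc n → Euc n)
    (x y : Euc n) (w : EuclideanSpace ℝ (Fin m)) (i : Fin m) : ℝ :=
  g i y + ⟪g' i y, x - y⟫ + w i / 2 * ‖x - y‖ ^ 2

/-- The space `ℝⁿ × ℝⁿ × ℝᵐ` with the (L²) Euclidean inner product. -/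
abbrev PS (n m : ℕ) : Type :=
  WithLp 2 (Euc n × WithLp 2 (Euc n × EuclideanSpace ℝ (Fin m)))

/-- The potential function `bar F`. -/
def barF {n m : ℕ} (f P1 P2 : Euc n → ℝ) (g : Fin m → Euc n → ℝ)
    (g' : Fin m → Euc n → Euc n)
    (p : PS n m) : EReal :=
  if ∀ i, barG g g' p.ofLp.1 p.ofLp.2.ofLp.1 p.ofLp.2.ofLp.2 i ≤ 0 then
    ((f p.ofLp.1 + P1 p.ofLp.1 - P2 p.ofLp.1 : ℝ) : EReal) else ⊤

/-- Stationary points of problem (P). -/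
def IsStationaryPt {n m : ℕ} (f P1 P2 : Euc n → ℝ) (f' : Euc n → Euc n)
    (g : Fin m → Euc n → ℝ) (g' : Fin m → Euc n → Euc n) (x : Euc n) : Prop :=
  (∀ i, g i x ≤ 0) ∧ ∃ lam : Fin m → ℝ, (∀ i, 0 ≤ lam i) ∧
    (∀ i, lam i * g i x = 0) ∧
    ∃ u ∈ ConvexSubdiff P1 x, ∃ v ∈ ConvexSubdiff P2 x,
      f' x + u - v + ∑ i, lam i • g' i x = 0

/-- Assumptions A (smoothness, Lipschitz gradients, level-boundedness) and B (MFCQ). -/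
def AssumptionAB {n m : ℕ} (f P1 P2 : Euc n → ℝ) (f' : Euc n → Euc n)
    (g : Fin m → Euc n → ℝ) (g' : Fin m → Euc n → Euc n)
    (Lf : ℝ) (Lg : Fin m → ℝ) : Prop :=
  (∀ x, HasGradientAt f (f' x) x) ∧ LipschitzWith Lf.toNNReal f' ∧
  ConvexOn ℝ univ P1 ∧ Continuous P1 ∧ ConvexOn ℝ univ P2 ∧ Continuous P2 ∧
  (∀ i x, HasGradientAt (g i) (g' i x) x) ∧
  (∀ i, LipschitzWith (Lg i).toNNReal (g' i)) ∧
  {x : Euc n | ∀ i, g i x ≤ 0}.Nonempty ∧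
  (∀ σ : ℝ, IsBounded {x | Fobj f P1 P2 g x ≤ (σ : EReal)}) ∧
  (∀ x : Euc n, (∀ i, g i x ≤ 0) → ∃ d, ∀ i, g i x = 0 → ⟪g' i x, d⟫ < 0)

/-- The sequences generated by the SCP_ls algorithm. -/
structure SCPlsSeq {n m : ℕ} (f P1 P2 : Euc n → ℝ) (f' : Euc n → Euc n)
    (g : Fin m → Euc n → ℝ) (g' : Fin m → Euc n → Euc n)
    (c Llo : ℝ) (x ξ : ℕ → Euc n) (Lfs : ℕ → ℝ)
    (Lgs : ℕ → EuclideanSpace ℝ (Fin m)) : Prop where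
  feas0 : ∀ i, g i (x 0) ≤ 0
  subgrad : ∀ t, ξ t ∈ ConvexSubdiff P2 (x t)
  Lf_lb : ∀ t, Llo ≤ Lfs t
  Lg_lb : ∀ t i, Llo ≤ Lgs t i
  bdd : ∃ M : ℝ, ∀ t, Lfs t ≤ M ∧ ∀ i, Lgs t i ≤ M
  feas_sub : ∀ t i, barG g g' (x (t + 1)) (x t) (Lgs t) i ≤ 0
  min : ∀ t z, (∀ i, barG g g' z (x t) (Lgs t) i ≤ 0) →
    ⟪f' (x t) - ξ t, x (t + 1) - x t⟫ + Lfs t / 2 * ‖x (t + 1) - x t‖ ^ 2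
        + P1 (x (t + 1))
      ≤ ⟪f' (x t) - ξ t, z - x t⟫ + Lfs t / 2 * ‖z - x t‖ ^ 2 + P1 z
  uniq : ∀ t z, (∀ i, barG g g' z (x t) (Lgs t) i ≤ 0) →
    ⟪f' (x t) - ξ t, z - x t⟫ + Lfs t / 2 * ‖z - x t‖ ^ 2 + P1 z
      ≤ ⟪f' (x t) - ξ t, x (t + 1) - x t⟫ + Lfs t / 2 * ‖x (t + 1) - x t‖ ^ 2
        + P1 (x (t + 1)) → z = x (t + 1)
  feas : ∀ t i, g i (x (t + 1)) ≤ 0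
  descent : ∀ t, f (x (t + 1)) + P1 (x (t + 1)) - P2 (x (t + 1)) ≤
    f (x t) + P1 (x t) - P2 (x t) - c / 2 * ‖x (t + 1) - x t‖ ^ 2

/-- Cluster points of a sequence (limits of subsequences). -/
def seqClusterPts {X : Type*} [TopologicalSpace X] (u : ℕ → X) : Set X :=
  {p | ∃ φ : ℕ → ℕ, StrictMono φ ∧ Tendsto (u ∘ φ) atTop (𝓝 p)}

set_option maxHeartbeats 2000000 in
/-- an explicit element of the limiting subdifferential of `bar F`,
built from a normal-cone multiplier and a subgradient of `P₁`. -/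
theorem stmt7 {n m : ℕ} (f P1 P2 : Euc n → ℝ) (f' : Euc n → Euc n)
    (g : Fin m → Euc n → ℝ) (g' : Fin m → Euc n → Euc n)
    (g'' : Fin m → Euc n → (Euc n →L[ℝ] Euc n))
    (hf' : ∀ x, HasGradientAt f (f' x) x)
    (hP1conv : ConvexOn ℝ univ P1) (hP1cont : Continuous P1)
    (hP2conv : ConvexOn ℝ univ P2) (hP2cont : Continuous P2)
    (hg2 : ∀ i, ContDiff ℝ 2 (g i))
    (hg' : ∀ i x, HasGradientAt (g i) (g' i x) x)
    (hg'' : ∀ i x, HasFDerivAt (g' i) (g'' i x) x)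
    (x y : Euc n) (w : EuclideanSpace ℝ (Fin m))
    (P2' : Euc n → Euc n) (U : Set (Euc n)) (hU : U ∈ 𝓝 x)
    (hP2' : ∀ z ∈ U, HasGradientAt P2 (P2' z) z) (hP2'cont : ContinuousOn P2' U)
    (lam : EuclideanSpace ℝ (Fin m)) (hlam : ∀ i, 0 ≤ lam i)
    (hGle : ∀ i, barG g g' x y w i ≤ 0)
    (hcompl : ∀ i, lam i * barG g g' x y w i = 0)
    (u : Euc n) (hu : u ∈ ConvexSubdiff P1 x) :
    (WithLp.toLp 2 (f' x - P2' x + u + ∑ i, lam i • (g' i y + w i • (x - y)),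
      WithLp.toLp 2 (∑ i, lam i • (g'' i y (x - y) - w i • (x - y)),
      (2⁻¹ * ‖x - y‖ ^ 2) • lam)) : PS n m)
      ∈ LimSubdiff (barF f P1 P2 g g') (WithLp.toLp 2 (x, WithLp.toLp 2 (y, w))) := by
  classical
  have hx_mem : x ∈ U := mem_of_mem_nhds hU
  -- the candidate subgradient as an element of the product space
  set p : PS n m := WithLp.toLp 2 (x, WithLp.toLp 2 (y, w)) with hpdef
  set ζ : PS n m :=
    WithLp.toLp 2 (f' x - P2' x + u + ∑ i, lam i • (g' i y + w i • (x - y)),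
      WithLp.toLp 2 (∑ i, lam i • (g'' i y (x - y) - w i • (x - y)),
      (2⁻¹ * ‖x - y‖ ^ 2) • lam)) with hζdef
  -- symmetry of the second derivative
  have hsymm : ∀ (i : Fin m) (b : Euc n), ⟪g'' i y b, x - y⟫ = ⟪g'' i y (x - y), b⟫ := by
    intro i b
    have hT : DifferentiableAt ℝ (fderiv ℝ (g i)) y := by
      have h1 : ContDiff ℝ 1 (fderiv ℝ (g i)) := (hg2 i).fderiv_right (by norm_num)
      exact h1.differentiable one_ne_zero y
    have hfd : ∀ a : Euc n, HasFDerivAt (fun z => (fderiv ℝ (g i) z) a)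
        ((ContinuousLinearMap.apply ℝ ℝ a).comp (fderiv ℝ (fderiv ℝ (g i)) y)) y :=
      fun a => (ContinuousLinearMap.apply ℝ ℝ a).hasFDerivAt.comp y hT.hasFDerivAt
    have hfd2 : ∀ a : Euc n, HasFDerivAt (fun z => (fderiv ℝ (g i) z) a)
        ((innerSL ℝ a).comp (g'' i y)) y := by
      intro a
      have hfun : (fun z => (fderiv ℝ (g i) z) a) = fun z => ⟪a, g' i z⟫ := by
        funext z
        rw [(hg' i z).hasFDerivAt.fderiv, InnerProductSpace.toDual_apply_apply]
        exact real_inner_comm _ _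
      rw [hfun]
      exact (innerSL ℝ a).hasFDerivAt.comp y (hg'' i y)
    have heq : ∀ (a b' : Euc n), fderiv ℝ (fderiv ℝ (g i)) y b' a = ⟪g'' i y b', a⟫ := by
      intro a b'
      have huniq := (hfd a).unique (hfd2 a)
      calc fderiv ℝ (fderiv ℝ (g i)) y b' a
          = ((ContinuousLinearMap.apply ℝ ℝ a).comp (fderiv ℝ (fderiv ℝ (g i)) y)) b' := rfl
        _ = ((innerSL ℝ a).comp (g'' i y)) b' := by rw [huniq]
        _ = ⟪a, g'' i y b'⟫ := by simp
        _ = ⟪g'' i y b', a⟫ := real_inner_comm _ _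
    have hsy : IsSymmSndFDerivAt ℝ (g i) y :=
      (hg2 i).contDiffAt.isSymmSndFDerivAt (by simp)
    calc ⟪g'' i y b, x - y⟫ = fderiv ℝ (fderiv ℝ (g i)) y b (x - y) := (heq _ _).symm
      _ = fderiv ℝ (fderiv ℝ (g i)) y (x - y) b := hsy b (x - y)
      _ = ⟪g'' i y (x - y), b⟫ := heq _ _
  -- projections of the product space, as continuous linear maps
  obtain ⟨π₁, π₂, π₃, hπ₁v, hπ₂v, hπ₃v⟩ :
      ∃ (π₁ : PS n m →L[ℝ] Euc n) (π₂ : PS n m →L[ℝ] Euc n)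
        (π₃ : PS n m →L[ℝ] EuclideanSpace ℝ (Fin m)),
        (∀ v : PS n m, π₁ v = v.ofLp.1) ∧ (∀ v : PS n m, π₂ v = v.ofLp.2.ofLp.1) ∧
        (∀ v : PS n m, π₃ v = v.ofLp.2.ofLp.2) := by
    refine ⟨(ContinuousLinearMap.fst ℝ _ _).comp
        (WithLp.prodContinuousLinearEquiv 2 ℝ (Euc n)
          (WithLp 2 (Euc n × EuclideanSpace ℝ (Fin m)))).toContinuousLinearMap,
      (ContinuousLinearMap.fst ℝ _ _).comp
        ((WithLp.prodContinuousLinearEquiv 2 ℝ (Euc n)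
          (EuclideanSpace ℝ (Fin m))).toContinuousLinearMap.comp
          ((ContinuousLinearMap.snd ℝ _ _).comp
            (WithLp.prodContinuousLinearEquiv 2 ℝ (Euc n)
              (WithLp 2 (Euc n × EuclideanSpace ℝ (Fin m)))).toContinuousLinearMap)),
      (ContinuousLinearMap.snd ℝ _ _).comp
        ((WithLp.prodContinuousLinearEquiv 2 ℝ (Euc n)
          (EuclideanSpace ℝ (Fin m))).toContinuousLinearMap.comp
          ((ContinuousLinearMap.snd ℝ _ _).comp
            (WithLp.prodContinuousLinearEquiv 2 ℝ (Euc n)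
              (WithLp 2 (Euc n × EuclideanSpace ℝ (Fin m)))).toContinuousLinearMap)),
      fun _ => rfl, fun _ => rfl, fun _ => rfl⟩
  have hA : HasFDerivAt (fun z : PS n m => z.ofLp.1) π₁ p :=
    π₁.hasFDerivAt.congr_of_eventuallyEq (Filter.Eventually.of_forall fun v => (hπ₁v v).symm)
  have hB : HasFDerivAt (fun z : PS n m => z.ofLp.2.ofLp.1) π₂ p :=
    π₂.hasFDerivAt.congr_of_eventuallyEq (Filter.Eventually.of_forall fun v => (hπ₂v v).symm)
  have hC : HasFDerivAt (fun z : PS n m => z.ofLp.2.ofLp.2) π₃ p :=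
    π₃.hasFDerivAt.congr_of_eventuallyEq (Filter.Eventually.of_forall fun v => (hπ₃v v).symm)
  have hdiff : HasFDerivAt (fun z : PS n m => z.ofLp.1 - z.ofLp.2.ofLp.1) (π₁ - π₂) p := hA.sub hB
  have hp1 : p.ofLp.1 = x := rfl
  have hp2 : p.ofLp.2.ofLp.1 = y := rfl
  have hp3 : p.ofLp.2.ofLp.2 = w := rfl
  -- per-component derivatives of the constraint terms
  have hterm : ∀ i : Fin m, ∃ D : PS n m →L[ℝ] ℝ,
      HasFDerivAt (fun z : PS n m => lam i *
        (g i z.ofLp.2.ofLp.1 + ⟪g' i z.ofLp.2.ofLp.1, z.ofLp.1 - z.ofLp.2.ofLp.1⟫ +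
          2⁻¹ * (z.ofLp.2.ofLp.2 i * ⟪z.ofLp.1 - z.ofLp.2.ofLp.1, z.ofLp.1 - z.ofLp.2.ofLp.1⟫))) D p ∧
      ∀ v : PS n m, D v = lam i * (⟪g' i y, v.ofLp.1⟫ + ⟪g'' i y (x - y), v.ofLp.2.ofLp.1⟫
        + w i * ⟪x - y, v.ofLp.1 - v.ofLp.2.ofLp.1⟫ + 2⁻¹ * ‖x - y‖ ^ 2 * v.ofLp.2.ofLp.2 i) := by
    intro i
    have hgB := (hg' i y).hasFDerivAt.comp p hB
    have hg'B : HasFDerivAt (fun z : PS n m => g' i z.ofLp.2.ofLp.1) ((g'' i y).comp π₂) p :=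
      (hg'' i y).comp p hB
    have hwC : HasFDerivAt (fun z : PS n m => z.ofLp.2.ofLp.2 i)
        ((EuclideanSpace.proj i).comp π₃) p :=
      ((EuclideanSpace.proj (𝕜 := ℝ) i).comp π₃).hasFDerivAt.congr_of_eventuallyEq
        (Filter.Eventually.of_forall fun v => by
          simp [ContinuousLinearMap.comp_apply, hπ₃v v])
    have hin1 := HasFDerivAt.inner ℝ hg'B hdiff
    have hin2 := HasFDerivAt.inner ℝ hdiff hdiff
    refine ⟨_, ((hgB.add hin1).add ((hwC.mul hin2).const_mul (2⁻¹ : ℝ))).const_mul (lam i), ?_⟩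
    intro v
    simp only [ContinuousLinearMap.smul_apply, ContinuousLinearMap.add_apply,
      ContinuousLinearMap.coe_comp', Function.comp_apply, fderivInnerCLM_apply,
      ContinuousLinearMap.prod_apply, ContinuousLinearMap.sub_apply,
      InnerProductSpace.toDual_apply_apply, hπ₁v, hπ₂v, hπ₃v, PiLp.proj_apply,
      smul_eq_mul, hp1, hp2, hp3]
    rw [hsymm i, real_inner_self_eq_norm_sq, real_inner_comm (v.ofLp.1 - v.ofLp.2.ofLp.1) (x - y)]
    simp only [inner_sub_right]
    ring
  choose D hD hDval using hterm
  -- the smooth part of barF (with P1 removed) and its derivative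
  obtain ⟨L, hφ, hLval⟩ :
      ∃ L : PS n m →L[ℝ] ℝ, HasFDerivAt (fun z : PS n m =>
          f z.ofLp.1 - P2 z.ofLp.1 + ∑ i, lam i *
            (g i z.ofLp.2.ofLp.1 + ⟪g' i z.ofLp.2.ofLp.1, z.ofLp.1 - z.ofLp.2.ofLp.1⟫ +
              2⁻¹ * (z.ofLp.2.ofLp.2 i * ⟪z.ofLp.1 - z.ofLp.2.ofLp.1, z.ofLp.1 - z.ofLp.2.ofLp.1⟫))) L p
        ∧ ∀ v : PS n m, L v = ⟪ζ, v⟫ - ⟪u, v.ofLp.1⟫ := by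
    refine ⟨_, (((hf' x).hasFDerivAt.comp p hA).sub
        ((hP2' x hx_mem).hasFDerivAt.comp p hA)).add
      (HasFDerivAt.fun_sum (fun i _ => hD i)), ?_⟩
    intro v
    simp only [ContinuousLinearMap.add_apply, ContinuousLinearMap.sub_apply,
      ContinuousLinearMap.coe_comp', Function.comp_apply, InnerProductSpace.toDual_apply_apply,
      hπ₁v, ContinuousLinearMap.coe_sum', Finset.sum_apply, hDval]
    rw [hζdef]
    rw [WithLp.prod_inner_apply, WithLp.prod_inner_apply]
    simp only [sum_inner, inner_add_left, inner_sub_left, real_inner_smul_left,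
      inner_sub_right]
    have hlv : (inner ℝ lam v.ofLp.2.ofLp.2 : ℝ) = ∑ i, lam i * v.ofLp.2.ofLp.2 i := by
      rw [PiLp.inner_apply]
      simp only [RCLike.inner_apply, conj_trivial, mul_comm]
    rw [hlv, Finset.mul_sum]
    have key : ∀ i ∈ Finset.univ, lam i * (⟪g' i y, v.ofLp.1⟫ + ⟪g'' i y (x - y), v.ofLp.2.ofLp.1⟫ +
          w i * (⟪x, v.ofLp.1⟫ - ⟪y, v.ofLp.1⟫ - (⟪x, v.ofLp.2.ofLp.1⟫ - ⟪y, v.ofLp.2.ofLp.1⟫)) +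
          2⁻¹ * ‖x - y‖ ^ 2 * v.ofLp.2.ofLp.2 i)
        = lam i * (⟪g' i y, v.ofLp.1⟫ + w i * (⟪x, v.ofLp.1⟫ - ⟪y, v.ofLp.1⟫)) +
          (lam i * (⟪g'' i y (x - y), v.ofLp.2.ofLp.1⟫ - w i * (⟪x, v.ofLp.2.ofLp.1⟫ - ⟪y, v.ofLp.2.ofLp.1⟫)) +
            2⁻¹ * ‖x - y‖ ^ 2 * (lam i * v.ofLp.2.ofLp.2 i)) := fun i _ => by ring
    rw [Finset.sum_congr rfl key, Finset.sum_add_distrib, Finset.sum_add_distrib]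
    ring
  -- value of barF at p
  have hFp : barF f P1 P2 g g' p = ((f x + P1 x - P2 x : ℝ) : EReal) := by
    unfold barF
    exact if_pos hGle
  -- regular subgradient at p itself
  have hreg : ζ ∈ RegularSubdiff (barF f P1 P2 g g') p := by
    refine ⟨by rw [hFp]; exact EReal.coe_ne_top _, by rw [hFp]; exact EReal.coe_ne_bot _, ?_⟩
    intro ε hε
    have hlo := Asymptotics.isLittleO_iff.mp hφ.isLittleO hε
    filter_upwards [hlo] with z hz
    by_cases hzf : ∀ i, barG g g' z.ofLp.1 z.ofLp.2.ofLp.1 z.ofLp.2.ofLp.2 i ≤ 0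
    · have hFz : barF f P1 P2 g g' z = ((f z.ofLp.1 + P1 z.ofLp.1 - P2 z.ofLp.1 : ℝ) : EReal) := by
        unfold barF
        exact if_pos hzf
      rw [hFp, hFz, EReal.toReal_coe, EReal.coe_le_coe_iff]
      -- the inequality over the reals
      have hP1ineq := hu z.ofLp.1
      have hSz : ∑ i, lam i * barG g g' z.ofLp.1 z.ofLp.2.ofLp.1 z.ofLp.2.ofLp.2 i ≤ 0 := by
        apply Finset.sum_nonpos
        intro i _
        simpa using mul_le_mul_of_nonneg_left (hzf i) (hlam i)
      have hSp : ∑ i, lam i * barG g g' x y w i = 0 :=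
        Finset.sum_eq_zero fun i _ => hcompl i
      have hφz : ∀ v : PS n m, (∑ i, lam i *
          (g i v.ofLp.2.ofLp.1 + ⟪g' i v.ofLp.2.ofLp.1, v.ofLp.1 - v.ofLp.2.ofLp.1⟫ +
            2⁻¹ * (v.ofLp.2.ofLp.2 i * ⟪v.ofLp.1 - v.ofLp.2.ofLp.1, v.ofLp.1 - v.ofLp.2.ofLp.1⟫)))
          = ∑ i, lam i * barG g g' v.ofLp.1 v.ofLp.2.ofLp.1 v.ofLp.2.ofLp.2 i := by
        intro v
        refine Finset.sum_congr rfl fun i _ => ?_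
        unfold barG
        rw [real_inner_self_eq_norm_sq]
        ring
      have hEp : ∑ i, lam i * (g i y + ⟪g' i y, x - y⟫ + 2⁻¹ * (w i * ⟪x - y, x - y⟫))
          = 0 := by
        rw [← hSp]
        refine Finset.sum_congr rfl fun i _ => ?_
        unfold barG
        rw [real_inner_self_eq_norm_sq]
        ring
      rw [Real.norm_eq_abs, hφz z, hEp] at hz
      have habs := (abs_le.mp hz).1
      have hL := hLval (z - p)
      have hzp1 : (z - p).ofLp.1 = z.ofLp.1 - x := rfl
      rw [hzp1] at hL
      linarith [habs, hL, hP1ineq, hSz]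
    · have hFz : barF f P1 P2 g g' z = ⊤ := by
        unfold barF
        exact if_neg hzf
      rw [hFz]
      exact le_top
  exact ⟨fun _ => p, fun _ => ζ, fun _ => hreg, tendsto_const_nhds, tendsto_const_nhds,
    tendsto_const_nhds⟩
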